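/- arXiv:1006.4641 — 2 statements merged into one kernel-verified Lean document; each statement's English description precedes it below -/
import Mathlib

section
/- Let (ε_k)_{k≥1} be i.i.d. nonnegative random variables with E(ε_1²) < ∞, mean μ > 0 and variance σ². Let X_n = ε_1 + … + ε_n, X_0 = X_{-1} = 0, ε_0 = 0, and D_n := Σ_{k=1}^n X_{k-2}² Σ_{k=1}^n ε_{k-1}² − (Σ_{k=1}^n X_{k-2} ε_{k-1})². Then n^{-4} D_n converges almost surely to μ²(4σ² + μ²)/12 as n → ∞. -/
open MeasureTheory Filter ProbabilityTheory Topology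

lemma sum_sq_formula (n : ℕ) :
    ∑ j ∈ Finset.range n, (j:ℝ)^2 = (n:ℝ)*((n:ℝ)-1)*(2*(n:ℝ)-1)/6 := by
  induction n with
  | zero => simp
  | succ n ih => rw [Finset.sum_range_succ, ih]; push_cast; ring

lemma tendsto_sum_sq_div :
    Tendsto (fun n : ℕ => (∑ j ∈ Finset.range n, (j:ℝ)^2) / (n:ℝ)^3) atTop (𝓝 (1/3)) := by
  have h0 : Tendsto (fun n : ℕ => (1:ℝ)/n) atTop (𝓝 0) := tendsto_one_div_atTop_nhds_zero_nat
  have h : Tendsto (fun n : ℕ => (1 - 1/(n:ℝ))*(2 - 1/(n:ℝ))/6) atTop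
      (𝓝 (((1:ℝ)-0)*(2-0)/6)) :=
    ((tendsto_const_nhds.sub h0).mul (tendsto_const_nhds.sub h0)).div_const 6
  have he : ((1:ℝ)-0)*(2-0)/6 = 1/3 := by norm_num
  rw [he] at h
  apply h.congr'
  filter_upwards [eventually_ge_atTop 1] with n hn
  have hn0 : (n:ℝ) ≠ 0 := Nat.cast_ne_zero.2 (by omega)
  rw [sum_sq_formula]
  field_simp

lemma tendsto_sum_sq_atTop :
    Tendsto (fun n : ℕ => ∑ j ∈ Finset.range n, (j:ℝ)^2) atTop atTop := by
  have hle : ∀ᶠ n : ℕ in atTop, ((n:ℝ)-1)^2 ≤ ∑ j ∈ Finset.range n, (j:ℝ)^2 := by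
    filter_upwards [eventually_ge_atTop 1] with n hn
    have h := Finset.single_le_sum (f := fun j : ℕ => (j:ℝ)^2)
      (fun i _ => sq_nonneg ((i:ℝ))) (Finset.mem_range.2 (show n - 1 < n by omega))
    rwa [Nat.cast_sub hn, Nat.cast_one] at h
  have hbase : Tendsto (fun n : ℕ => ((n:ℝ)-1)^2) atTop atTop := by
    have h1 : Tendsto (fun n : ℕ => (n:ℝ)-1) atTop atTop := by
      simpa [sub_eq_add_neg] using
        tendsto_atTop_add_const_right atTop (-1 : ℝ) tendsto_natCast_atTop_atTop
    exact ((tendsto_pow_atTop (n := 2) two_ne_zero).comp h1 : _)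
  exact tendsto_atTop_mono' _ hle hbase

lemma cubic_cesaro {b : ℕ → ℝ} {c : ℝ}
    (hb : Tendsto (fun j : ℕ => b j / (j:ℝ)^2) atTop (𝓝 c)) :
    Tendsto (fun n : ℕ => (∑ j ∈ Finset.range n, b j) / (n:ℝ)^3) atTop (𝓝 (c/3)) := by
  have hgpos : (0:ℕ → ℝ) ≤ fun j : ℕ => (j:ℝ)^2 := fun j => sq_nonneg _
  have hf : (fun j : ℕ => b j - c * (j:ℝ)^2) =o[atTop] (fun j : ℕ => (j:ℝ)^2) := by
    apply Asymptotics.isLittleO_of_tendsto'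
    · filter_upwards [eventually_ge_atTop 1] with j hj h0
      have hjp : (0:ℝ) < (j:ℝ) := by exact_mod_cast hj
      exact absurd h0 (by positivity)
    · have ht := hb.sub_const c
      rw [sub_self] at ht
      apply ht.congr'
      filter_upwards [eventually_ge_atTop 1] with j hj
      have hjp : (0:ℝ) < (j:ℝ) := by exact_mod_cast hj
      have hj0 : ((j:ℝ))^2 ≠ 0 := by positivity
      field_simp
  have hsum := hf.sum_range hgpos tendsto_sum_sq_atTop
  have h0 := hsum.tendsto_div_nhds_zero
  have hcomb : Tendsto (fun n : ℕ =>
      ((∑ j ∈ Finset.range n, (b j - c * (j:ℝ)^2)) / (∑ j ∈ Finset.range n, (j:ℝ)^2))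
        * ((∑ j ∈ Finset.range n, (j:ℝ)^2) / (n:ℝ)^3)
      + c * ((∑ j ∈ Finset.range n, (j:ℝ)^2) / (n:ℝ)^3)) atTop
      (𝓝 (0 * (1/3) + c * (1/3))) :=
    (h0.mul tendsto_sum_sq_div).add (tendsto_sum_sq_div.const_mul c)
  rw [show (0:ℝ) * (1/3) + c * (1/3) = c/3 by ring] at hcomb
  apply hcomb.congr'
  filter_upwards [eventually_ge_atTop 2] with n hn
  have hn0 : (n:ℝ) ≠ 0 := Nat.cast_ne_zero.2 (by omega)
  have hGpos : (0:ℝ) < ∑ j ∈ Finset.range n, (j:ℝ)^2 := by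
    rw [sum_sq_formula]
    have h2 : (2:ℝ) ≤ (n:ℝ) := by exact_mod_cast hn
    have a1 : (0:ℝ) < (n:ℝ) := by linarith
    have a2 : (0:ℝ) < (n:ℝ) - 1 := by linarith
    have a3 : (0:ℝ) < 2*(n:ℝ) - 1 := by linarith
    exact div_pos (mul_pos (mul_pos a1 a2) a3) (by norm_num)
  have hsub : ∑ j ∈ Finset.range n, (b j - c * (j:ℝ)^2)
      = (∑ j ∈ Finset.range n, b j) - c * ∑ j ∈ Finset.range n, (j:ℝ)^2 := by
    rw [Finset.sum_sub_distrib, Finset.mul_sum]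
  rw [hsub]
  field_simp
  ring

lemma two_mul_sum_cross (x : ℕ → ℝ) (n : ℕ) :
    2 * ∑ j ∈ Finset.range n, (∑ i ∈ Finset.range j, x i) * x j
      = (∑ i ∈ Finset.range n, x i)^2 - ∑ j ∈ Finset.range n, (x j)^2 := by
  induction n with
  | zero => simp
  | succ n ih =>
    rw [Finset.sum_range_succ (fun j => (∑ i ∈ Finset.range j, x i) * x j),
      Finset.sum_range_succ (fun j => (x j)^2), Finset.sum_range_succ x, mul_add, ih]
    ring

lemma main_calc (e : ℕ → ℝ) (μ m2 : ℝ)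
    (h1 : Tendsto (fun n : ℕ => (∑ i ∈ Finset.range n, e i) / (n:ℝ)) atTop (𝓝 μ))
    (h2 : Tendsto (fun n : ℕ => (∑ j ∈ Finset.range n, (e j)^2) / (n:ℝ)) atTop (𝓝 m2)) :
    Tendsto (fun n : ℕ =>
        ((∑ j ∈ Finset.range (n-1), (∑ i ∈ Finset.range j, e i)^2)
            * (∑ j ∈ Finset.range (n-1), (e j)^2)
          - (∑ j ∈ Finset.range (n-1), (∑ i ∈ Finset.range j, e i) * e j)^2) / (n:ℝ)^4)
      atTop (𝓝 (μ^2/3 * m2 - (μ^2/2)^2)) := by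
  -- A: sum of squares of partial sums
  have hA : Tendsto (fun n : ℕ =>
      (∑ j ∈ Finset.range n, (∑ i ∈ Finset.range j, e i)^2) / (n:ℝ)^3) atTop (𝓝 (μ^2/3)) := by
    have hb : Tendsto (fun j : ℕ => (∑ i ∈ Finset.range j, e i)^2 / (j:ℝ)^2)
        atTop (𝓝 (μ^2)) :=
      (h1.pow 2).congr (fun j => div_pow _ _ 2)
    exact cubic_cesaro hb
  -- C: cross sums
  have hC : Tendsto (fun n : ℕ =>
      (∑ j ∈ Finset.range n, (∑ i ∈ Finset.range j, e i) * e j) / (n:ℝ)^2)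
      atTop (𝓝 (μ^2/2)) := by
    have key : Tendsto (fun n : ℕ =>
        (((∑ i ∈ Finset.range n, e i)/(n:ℝ))^2
          - ((∑ j ∈ Finset.range n, (e j)^2)/(n:ℝ)) * (1/(n:ℝ)))/2) atTop
        (𝓝 ((μ^2 - m2*0)/2)) :=
      ((h1.pow 2).sub (h2.mul tendsto_one_div_atTop_nhds_zero_nat)).div_const 2
    rw [show (μ^2 - m2*0)/2 = μ^2/2 by ring] at key
    apply key.congr'
    filter_upwards [eventually_ge_atTop 1] with n hn
    have hn0 : (n:ℝ) ≠ 0 := Nat.cast_ne_zero.2 (by omega)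
    have hid := two_mul_sum_cross e n
    have hCn : ∑ j ∈ Finset.range n, (∑ i ∈ Finset.range j, e i) * e j
        = ((∑ i ∈ Finset.range n, e i)^2 - ∑ j ∈ Finset.range n, (e j)^2)/2 := by
      linarith [hid]
    rw [hCn]
    field_simp
  -- ratio (n-1)/n → 1
  have hr : Tendsto (fun n : ℕ => (((n-1:ℕ):ℝ))^4 / (n:ℝ)^4) atTop (𝓝 1) := by
    have hq : Tendsto (fun n : ℕ => ((n-1:ℕ):ℝ) / (n:ℝ)) atTop (𝓝 1) := by
      have h0 : Tendsto (fun n : ℕ => 1 - 1/(n:ℝ)) atTop (𝓝 (1 - 0)) :=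
        tendsto_const_nhds.sub tendsto_one_div_atTop_nhds_zero_nat
      rw [sub_zero] at h0
      apply h0.congr'
      filter_upwards [eventually_ge_atTop 1] with n hn
      have hn0 : (n:ℝ) ≠ 0 := Nat.cast_ne_zero.2 (by omega)
      rw [Nat.cast_sub hn, Nat.cast_one]
      field_simp
    have := hq.pow 4
    rw [one_pow] at this
    exact this.congr (fun n => div_pow _ _ 4)
  -- composition with n - 1
  have hsub : Tendsto (fun n : ℕ => n - 1) atTop atTop := tendsto_sub_atTop_nat 1
  have hg : Tendsto (fun m : ℕ =>
      ((∑ j ∈ Finset.range m, (∑ i ∈ Finset.range j, e i)^2)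
          * (∑ j ∈ Finset.range m, (e j)^2)
        - (∑ j ∈ Finset.range m, (∑ i ∈ Finset.range j, e i) * e j)^2) / (m:ℝ)^4)
      atTop (𝓝 (μ^2/3 * m2 - (μ^2/2)^2)) := by
    have hcomb : Tendsto (fun m : ℕ =>
        ((∑ j ∈ Finset.range m, (∑ i ∈ Finset.range j, e i)^2)/(m:ℝ)^3)
          * ((∑ j ∈ Finset.range m, (e j)^2)/(m:ℝ))
        - ((∑ j ∈ Finset.range m, (∑ i ∈ Finset.range j, e i) * e j)/(m:ℝ)^2)^2)
        atTop (𝓝 (μ^2/3 * m2 - (μ^2/2)^2)) :=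
      (hA.mul h2).sub (hC.pow 2)
    apply hcomb.congr'
    filter_upwards [eventually_ge_atTop 1] with m hm
    have hm0 : (m:ℝ) ≠ 0 := Nat.cast_ne_zero.2 (by omega)
    field_simp
  have hfinal : Tendsto (fun n : ℕ =>
      (((∑ j ∈ Finset.range (n-1), (∑ i ∈ Finset.range j, e i)^2)
          * (∑ j ∈ Finset.range (n-1), (e j)^2)
        - (∑ j ∈ Finset.range (n-1), (∑ i ∈ Finset.range j, e i) * e j)^2) / ((n-1:ℕ):ℝ)^4)
      * (((n-1:ℕ):ℝ)^4 / (n:ℝ)^4)) atTop (𝓝 ((μ^2/3 * m2 - (μ^2/2)^2) * 1)) :=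
    (hg.comp hsub).mul hr
  rw [mul_one] at hfinal
  apply hfinal.congr'
  filter_upwards [eventually_ge_atTop 2] with n hn
  have hm0 : ((n-1:ℕ):ℝ) ≠ 0 := Nat.cast_ne_zero.2 (by omega)
  have h4 : (((n-1:ℕ):ℝ))^4 ≠ 0 := pow_ne_zero _ hm0
  rw [div_mul_div_comm, mul_comm, mul_div_mul_left _ _ h4]

/-- For an i.i.d. nonnegative square-integrable sequence with mean μ > 0 and variance σ²,
with X_n = ε_1 + ⋯ + ε_n (here `ε j` stands for ε_{j+1}, `X j = ∑_{i<j} ε i`), the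
determinant D_n = ΣX_{k-2}² Σε_{k-1}² − (ΣX_{k-2}ε_{k-1})² satisfies
n⁻⁴ D_n → μ²(4σ²+μ²)/12 almost surely. -/
theorem stmt6 {Ω : Type*} [MeasurableSpace Ω] (P : Measure Ω) [IsProbabilityMeasure P]
    (ε : ℕ → Ω → ℝ) (hmeas : ∀ i, Measurable (ε i))
    (hindep : iIndepFun ε P)
    (hident : ∀ i, IdentDistrib (ε i) (ε 0) P P)
    (hpos : ∀ i ω, 0 ≤ ε i ω)
    (hL2 : Integrable (fun ω => (ε 0 ω)^2) P)
    (μ σ : ℝ) (hμ : ∫ ω, ε 0 ω ∂P = μ) (hμpos : 0 < μ)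
    (hσ : ∫ ω, (ε 0 ω - μ)^2 ∂P = σ^2) :
    ∀ᵐ ω ∂P, Tendsto (fun n : ℕ =>
        ((∑ j ∈ Finset.range (n-1), (∑ i ∈ Finset.range j, ε i ω)^2)
            * (∑ j ∈ Finset.range (n-1), (ε j ω)^2)
          - (∑ j ∈ Finset.range (n-1), (∑ i ∈ Finset.range j, ε i ω) * ε j ω)^2) / (n:ℝ)^4)
      atTop (𝓝 (μ^2 * (4*σ^2 + μ^2) / 12)) := by
  -- integrability of ε 0
  have hInt : Integrable (ε 0) P := by
    refine ((integrable_const (1:ℝ)).add hL2).mono' (hmeas 0).aestronglyMeasurable ?_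
    refine ae_of_all _ fun ω => ?_
    rw [Real.norm_eq_abs, abs_le]
    simp only [Pi.add_apply]
    constructor <;> nlinarith [sq_nonneg (ε 0 ω - 1), sq_nonneg (ε 0 ω + 1)]
  -- SLLN for ε
  have slln1 := strong_law_ae_real ε hInt
    (fun i j hij => hindep.indepFun hij) hident
  rw [hμ] at slln1
  -- SLLN for ε²
  have hindep2 : iIndepFun (fun i ω => (ε i ω)^2) P :=
    hindep.comp (fun _ x => x^2) (fun _ => measurable_id.pow_const 2)
  have hident2 : ∀ i, IdentDistrib (fun ω => (ε i ω)^2) (fun ω => (ε 0 ω)^2) P P :=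
    fun i => (hident i).comp (measurable_id.pow_const 2)
  have slln2 := strong_law_ae_real (fun i ω => (ε i ω)^2) hL2
    (fun i j hij => hindep2.indepFun hij) hident2
  -- second moment
  have hInt2 : Integrable (fun ω => (ε 0 ω - μ)^2) P := by
    have heq : (fun ω => (ε 0 ω - μ)^2)
        = fun ω => (ε 0 ω)^2 - (2*μ)*(ε 0 ω) + μ^2 := funext fun ω => by ring
    rw [heq]
    exact (hL2.sub (hInt.const_mul (2*μ))).add (integrable_const _)
  have hm2 : ∫ ω, (ε 0 ω)^2 ∂P = σ^2 + μ^2 := by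
    have heq : (fun ω => (ε 0 ω)^2)
        = fun ω => (ε 0 ω - μ)^2 + ((2*μ)*(ε 0 ω) - μ^2) := funext fun ω => by ring
    have ha : Integrable (fun ω => (2*μ)*(ε 0 ω) - μ^2) P := by
      exact (hInt.const_mul (2*μ)).sub (integrable_const _)
    have hb : Integrable (fun ω => (2*μ)*(ε 0 ω)) P := hInt.const_mul (2*μ)
    have hc : Integrable (fun _ : Ω => (μ:ℝ)^2) P := integrable_const _
    rw [heq, integral_add hInt2 ha, integral_sub hb hc, integral_const_mul, hμ, hσ]
    simp [measure_univ]
    ring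
  rw [hm2] at slln2
  filter_upwards [slln1, slln2] with ω h1 h2
  have := main_calc (fun i => ε i ω) μ (σ^2 + μ^2) h1 h2
  rw [show μ^2/3 * (σ^2 + μ^2) - (μ^2/2)^2 = μ^2 * (4*σ^2 + μ^2) / 12 by ring] at this
  exact this
end

section
/- Let (S, d_S) and (T, d_T) be metric spaces, (ξ_n) random elements of S converging in distribution to ξ, and f, f_n : S → T measurable maps. Suppose C ∈ B(S) satisfies P(ξ ∈ C) = 1 and: whenever s_n → s in S with s ∈ C, one has f_n(s_n) → f(s) in T. Then f_n(ξ_n) converges in distribution to f(ξ). -/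
open MeasureTheory Filter Topology

/-- Key set-theoretic lemma: points of `C` in every set
`closure (⋃ n ≥ m, fn n ⁻¹' F)` are mapped into the closed set `F` by `f`. -/
lemma stmt16_aux {S T : Type*} [MetricSpace S] [MetricSpace T]
    (fn : ℕ → S → T) (f : S → T) (C : Set S)
    (hcm : ∀ (s : ℕ → S) (s₀ : S), s₀ ∈ C → Tendsto s atTop (𝓝 s₀) →
      Tendsto (fun n => fn n (s n)) atTop (𝓝 (f s₀)))
    {F : Set T} (hF : IsClosed F) :
    C ∩ (⋂ m, closure (⋃ n ∈ Set.Ici m, fn n ⁻¹' F)) ⊆ f ⁻¹' F := by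
  classical
  rintro s₀ ⟨hs₀C, hs₀⟩
  simp only [Set.mem_iInter] at hs₀
  have hchoice : ∀ k : ℕ, ∃ (n : ℕ) (t : S),
      k ≤ n ∧ fn n t ∈ F ∧ dist s₀ t < 1 / (k + 1) := by
    intro k
    have h := hs₀ k
    rw [Metric.mem_closure_iff] at h
    obtain ⟨t, ht, hd⟩ := h (1 / (k + 1)) (by positivity)
    simp only [Set.mem_iUnion, Set.mem_Ici, exists_prop] at ht
    obtain ⟨n, hn, htn⟩ := ht
    exact ⟨n, t, hn, htn, hd⟩
  choose N t hN htF htd using hchoice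
  set s : ℕ → S := fun n =>
    if h : ∃ k, N k = n then t (Nat.findGreatest (fun k => N k = n) n) else s₀ with hsdef
  have hwit : ∀ n, (∃ k, N k = n) → N (Nat.findGreatest (fun k => N k = n) n) = n := by
    intro n h
    obtain ⟨k, hk⟩ := h
    exact Nat.findGreatest_spec (P := fun k => N k = n) (m := k) (hk ▸ hN k) hk
  have htend : Tendsto s atTop (𝓝 s₀) := by
    rw [Metric.tendsto_atTop]
    intro ε hε
    obtain ⟨K, hK⟩ := exists_nat_one_div_lt hε
    set B := Finset.image N (Finset.range (K + 1)) with hB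
    refine ⟨(B.sup id) + 1, fun n hn => ?_⟩
    have hnB : n ∉ B := by
      intro hmem
      have : n ≤ B.sup id := Finset.le_sup (f := id) hmem
      omega
    by_cases h : ∃ k, N k = n
    · have hg := hwit n h
      set k' := Nat.findGreatest (fun k => N k = n) n with hk'
      have hk'K : K + 1 ≤ k' := by
        by_contra hlt
        push_neg at hlt
        exact hnB (Finset.mem_image.mpr ⟨k', Finset.mem_range.mpr hlt, hg⟩)
      have h1 : dist s₀ (s n) < 1 / (k' + 1) := by
        rw [hsdef]
        simp only [dif_pos h]
        exact htd k'
      have h2 : (1 : ℝ) / (k' + 1) ≤ 1 / (K + 1) := by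
        apply one_div_le_one_div_of_le (by positivity)
        have : (K : ℝ) ≤ k' := by exact_mod_cast le_trans (Nat.le_succ K) hk'K
        linarith
      calc dist (s n) s₀ = dist s₀ (s n) := dist_comm _ _
        _ < 1 / (k' + 1) := h1
        _ ≤ 1 / (K + 1) := h2
        _ < ε := hK
    · rw [hsdef]
      simp only [dif_neg h]
      simpa using hε
  have hfreq : ∃ᶠ n in atTop, fn n (s n) ∈ F := by
    rw [frequently_atTop]
    intro m
    refine ⟨N m, hN m, ?_⟩
    have h : ∃ k, N k = N m := ⟨m, rfl⟩
    have hg := hwit (N m) h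
    rw [hsdef]
    simp only [dif_pos h]
    have := htF (Nat.findGreatest (fun k => N k = N m) (N m))
    rwa [hg] at this
  have hlim := hcm s s₀ hs₀C htend
  by_contra hnot
  have hev : ∀ᶠ n in atTop, fn n (s n) ∈ Fᶜ :=
    hlim (hF.isOpen_compl.mem_nhds hnot)
  obtain ⟨n, hn1, hn2⟩ := (hfreq.and_eventually hev).exists
  exact hn2 hn1

/-- Extended continuous mapping theorem (Kallenberg, Thm 3.27): if ξₙ ⇒ ξ in the metric
space S (weak convergence of laws, expressed via bounded continuous test functions),
P(ξ ∈ C) = 1, and fₙ(sₙ) → f(s) whenever sₙ → s ∈ C, then fₙ(ξₙ) ⇒ f(ξ). -/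
theorem stmt16 {Ω S T : Type*} [MeasurableSpace Ω]
    [MetricSpace S] [MeasurableSpace S] [BorelSpace S]
    [MetricSpace T] [MeasurableSpace T] [BorelSpace T]
    (P : Measure Ω) [IsProbabilityMeasure P]
    (ξn : ℕ → Ω → S) (ξ : Ω → S)
    (hξn : ∀ n, Measurable (ξn n)) (hξ : Measurable ξ)
    (fn : ℕ → S → T) (f : S → T)
    (hfn : ∀ n, Measurable (fn n)) (hf : Measurable f)
    (C : Set S) (hC : MeasurableSet C) (hPC : P (ξ ⁻¹' C) = 1)
    (hcm : ∀ (s : ℕ → S) (s₀ : S), s₀ ∈ C → Tendsto s atTop (𝓝 s₀) →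
      Tendsto (fun n => fn n (s n)) atTop (𝓝 (f s₀)))
    (hconv : ∀ g : BoundedContinuousFunction S ℝ,
      Tendsto (fun n => ∫ ω, g (ξn n ω) ∂P) atTop (𝓝 (∫ ω, g (ξ ω) ∂P))) :
    ∀ g : BoundedContinuousFunction T ℝ,
      Tendsto (fun n => ∫ ω, g (fn n (ξn n ω)) ∂P) atTop (𝓝 (∫ ω, g (f (ξ ω)) ∂P)) := by
  intro g
  have hμm : IsProbabilityMeasure (P.map ξ) := Measure.isProbabilityMeasure_map hξ.aemeasurable
  have hμnm : ∀ n, IsProbabilityMeasure (P.map (ξn n)) :=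
    fun n => Measure.isProbabilityMeasure_map (hξn n).aemeasurable
  have hνm : IsProbabilityMeasure (P.map (f ∘ ξ)) :=
    Measure.isProbabilityMeasure_map (hf.comp hξ).aemeasurable
  have hνnm : ∀ n, IsProbabilityMeasure (P.map (fn n ∘ ξn n)) :=
    fun n => Measure.isProbabilityMeasure_map ((hfn n).comp (hξn n)).aemeasurable
  set μ : ProbabilityMeasure S := ⟨P.map ξ, hμm⟩ with hμdef
  set μs : ℕ → ProbabilityMeasure S := fun n => ⟨P.map (ξn n), hμnm n⟩ with hμsdef
  set ν : ProbabilityMeasure T := ⟨P.map (f ∘ ξ), hνm⟩ with hνdef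
  set νs : ℕ → ProbabilityMeasure T := fun n => ⟨P.map (fn n ∘ ξn n), hνnm n⟩ with hνsdef
  have hμconv : Tendsto μs atTop (𝓝 μ) := by
    rw [ProbabilityMeasure.tendsto_iff_forall_integral_tendsto]
    intro h
    have e1 : ∀ n, ∫ x, h x ∂(μs n : Measure S) = ∫ ω, h (ξn n ω) ∂P := fun n =>
      integral_map (hξn n).aemeasurable h.continuous.measurable.aestronglyMeasurable
    have e2 : ∫ x, h x ∂(μ : Measure S) = ∫ ω, h (ξ ω) ∂P :=
      integral_map hξ.aemeasurable h.continuous.measurable.aestronglyMeasurable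
    simp only [e1, e2]
    exact hconv h
  -- Key closed-set limsup inequality.
  have hclosed : ∀ F : Set T, IsClosed F →
      atTop.limsup (fun n => (νs n : Measure T) F) ≤ (ν : Measure T) F := by
    intro F hF
    set A : ℕ → Set S := fun m => closure (⋃ n ∈ Set.Ici m, fn n ⁻¹' F) with hA
    have hAanti : Antitone A := fun a b hab =>
      closure_mono (Set.biUnion_subset_biUnion_left (fun n hn => le_trans hab hn))
    have hstep : ∀ m, atTop.limsup (fun n => (νs n : Measure T) F) ≤ (μ : Measure S) (A m) := by
      intro m
      have hle : ∀ᶠ n in atTop, (νs n : Measure T) F ≤ (μs n : Measure S) (A m) := by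
        filter_upwards [eventually_ge_atTop m] with n hn
        have heq : (νs n : Measure T) F = (μs n : Measure S) ((fn n) ⁻¹' F) := by
          show (P.map (fn n ∘ ξn n)) F = (P.map (ξn n)) ((fn n) ⁻¹' F)
          rw [Measure.map_apply ((hfn n).comp (hξn n)) hF.measurableSet,
              Measure.map_apply (hξn n) ((hfn n) hF.measurableSet)]
          rfl
        rw [heq]
        apply measure_mono
        simp only [hA]
        exact subset_trans
          (Set.subset_biUnion_of_mem (u := fun n => fn n ⁻¹' F) hn) subset_closure
      calc atTop.limsup (fun n => (νs n : Measure T) F)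
          ≤ atTop.limsup (fun n => (μs n : Measure S) (A m)) := limsup_le_limsup hle
        _ ≤ (μ : Measure S) (A m) :=
            ProbabilityMeasure.limsup_measure_closed_le_of_tendsto hμconv isClosed_closure
    have hiInf : (μ : Measure S) (⋂ m, A m) = ⨅ m, (μ : Measure S) (A m) :=
      hAanti.measure_iInter (fun m => isClosed_closure.measurableSet.nullMeasurableSet)
        ⟨0, measure_ne_top _ _⟩
    have hrest : (μ : Measure S) (⋂ m, A m) ≤ (ν : Measure T) F := by
      have hsub : (⋂ m, A m) ⊆ f ⁻¹' F ∪ Cᶜ := by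
        intro x hx
        by_cases hxC : x ∈ C
        · exact Or.inl (stmt16_aux fn f C hcm hF ⟨hxC, hx⟩)
        · exact Or.inr hxC
      have hCc : (μ : Measure S) Cᶜ = 0 := by
        show (P.map ξ) Cᶜ = 0
        rw [Measure.map_apply hξ hC.compl, Set.preimage_compl,
            measure_compl (hξ hC) (measure_ne_top _ _), hPC, measure_univ, tsub_self]
      have hνF : (ν : Measure T) F = (μ : Measure S) (f ⁻¹' F) := by
        show (P.map (f ∘ ξ)) F = (P.map ξ) (f ⁻¹' F)
        rw [Measure.map_apply (hf.comp hξ) hF.measurableSet,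
            Measure.map_apply hξ (hf hF.measurableSet)]
        rfl
      calc (μ : Measure S) (⋂ m, A m) ≤ (μ : Measure S) (f ⁻¹' F ∪ Cᶜ) := measure_mono hsub
        _ ≤ (μ : Measure S) (f ⁻¹' F) + (μ : Measure S) Cᶜ := measure_union_le _ _
        _ = (ν : Measure T) F := by rw [hCc, add_zero, hνF]
    calc atTop.limsup (fun n => (νs n : Measure T) F)
        ≤ ⨅ m, (μ : Measure S) (A m) := le_iInf hstep
      _ = (μ : Measure S) (⋂ m, A m) := hiInf.symm
      _ ≤ (ν : Measure T) F := hrest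
  have hopen : ∀ G, IsOpen G →
      (ν : Measure T) G ≤ atTop.liminf (fun n => (νs n : Measure T) G) :=
    (limsup_measure_closed_le_iff_liminf_measure_open_ge
      (μ := (ν : Measure T)) (μs := fun n => (νs n : Measure T))).mp hclosed
  have hopen' : ∀ G, IsOpen G → ν G ≤ atTop.liminf (fun n => νs n G) := by
    intro G hG
    have h := hopen G hG
    have aux : (ENNReal.ofNNReal (atTop.liminf fun n => νs n G)) =
        atTop.liminf (ENNReal.ofNNReal ∘ fun n => νs n G) := by
      refine Monotone.map_liminf_of_continuousAt (F := atTop) ENNReal.coe_mono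
        (fun n => νs n G) ?_ ?_ ?_
      · exact ENNReal.continuous_coe.continuousAt
      · exact IsBoundedUnder.isCoboundedUnder_ge ⟨1, by simp⟩
      · exact ⟨0, by simp⟩
    rw [← ENNReal.coe_le_coe, aux]
    simp only [Function.comp_def, ProbabilityMeasure.ennreal_coeFn_eq_coeFn_toMeasure]
    exact h
  have hνconv : Tendsto νs atTop (𝓝 ν) := tendsto_of_forall_isOpen_le_liminf hopen'
  have hint := ProbabilityMeasure.tendsto_iff_forall_integral_tendsto.mp hνconv g
  have e1 : ∀ n, ∫ x, g x ∂(νs n : Measure T) = ∫ ω, g (fn n (ξn n ω)) ∂P := fun n =>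
    integral_map ((hfn n).comp (hξn n)).aemeasurable g.continuous.measurable.aestronglyMeasurable
  have e2 : ∫ x, g x ∂(ν : Measure T) = ∫ ω, g (f (ξ ω)) ∂P :=
    integral_map (hf.comp hξ).aemeasurable g.continuous.measurable.aestronglyMeasurable
  simp only [e1, e2] at hint
  exact hint
end
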